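/- Let Q be a nonnegative self-adjoint trace-class operator on a real separable Hilbert space H and h : [0,∞) → ℝ a convex function with even extension, with one-dimensional Legendre transform l(r) = sup_{t≥0}(rt − h(t)). Define H₀(p) = h(‖Q^{1/2}p‖). Then the Legendre transform L₀(z) = sup_{p∈H}(⟨z,p⟩ − H₀(p)) satisfies: L₀(z) = l(‖Q^{-1/2}z‖) if z ∈ Im Q^{1/2}, and L₀(z) = +∞ if z ∉ Im Q^{1/2}. -/

import Mathlib

open Real Filter

private lemma ereal_le_of_forall_eps (c : ℝ) (x : EReal)
    (hx : ∀ ε : ℝ, 0 < ε → ((c - ε : ℝ) : EReal) ≤ x) : (c : EReal) ≤ x := by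
  induction x using EReal.rec with
  | bot =>
      have := le_bot_iff.1 (hx 1 one_pos)
      exact absurd this (EReal.coe_ne_bot _)
  | coe r =>
      have h' : ∀ ε : ℝ, 0 < ε → c - ε ≤ r := fun ε hε => by exact_mod_cast hx ε hε
      have : c ≤ r := by
        refine le_of_forall_pos_le_add fun ε hε => ?_
        have := h' ε hε; linarith
      exact_mod_cast this
  | top => exact le_top

private lemma ereal_eq_top_of_forall (x : EReal) (hx : ∀ M : ℝ, (M : EReal) ≤ x) : x = ⊤ := by
  induction x using EReal.rec with
  | bot => have := le_bot_iff.1 (hx 0); exact absurd this (EReal.coe_ne_bot _)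
  | coe r => have := hx (r + 1); norm_cast at this; linarith
  | top => rfl

/-- Legendre transform of `H₀(p) = h(‖Q^{1/2}p‖)` for a nonnegative self-adjoint trace-class
operator `Q` with square root `S = Q^{1/2}`: it equals `l(‖Q^{-1/2}z‖)` on the range of `S`
(where `Q^{-1/2}z` is the unique preimage orthogonal to `ker S`) and `+∞` off the range. -/
theorem legendre_transform_of_radial_hamiltonian
    {H : Type*} [NormedAddCommGroup H] [InnerProductSpace ℝ H] [CompleteSpace H]
    (Q S : H →L[ℝ] H)
    (hQsa : ∀ x y : H, (inner ℝ (Q x) y : ℝ) = inner ℝ x (Q y))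
    (hQpos : ∀ x : H, 0 ≤ (inner ℝ (Q x) x : ℝ))
    (hQtrace : ∀ e : ℕ → H, Orthonormal ℝ e → Summable (fun n => (inner ℝ (Q (e n)) (e n) : ℝ)))
    (hSsa : ∀ x y : H, (inner ℝ (S x) y : ℝ) = inner ℝ x (S y))
    (hSpos : ∀ x : H, 0 ≤ (inner ℝ (S x) x : ℝ))
    (hSsq : ∀ x : H, S (S x) = Q x)
    (h : ℝ → ℝ) (hconv : ConvexOn ℝ Set.univ h) (heven : ∀ r : ℝ, h (-r) = h r)
    (l : ℝ → EReal)
    (hl : ∀ r : ℝ, l r = ⨆ t : {t : ℝ // 0 ≤ t}, ((r * (t : ℝ) - h t : ℝ) : EReal))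
    (hlmono : Monotone l) (hltop : Tendsto l atTop (nhds ⊤))
    (H₀ : H → ℝ) (hH₀ : ∀ p : H, H₀ p = h ‖S p‖)
    (L₀ : H → EReal)
    (hL₀ : ∀ z : H, L₀ z = ⨆ p : H, (((inner ℝ z p : ℝ) - H₀ p : ℝ) : EReal)) :
    (∀ z p₀ : H, S p₀ = z → (∀ q : H, S q = 0 → (inner ℝ p₀ q : ℝ) = 0) →
        L₀ z = l ‖p₀‖) ∧
    (∀ z : H, z ∉ Set.range S → L₀ z = ⊤) := by
  classical
  -- h is nondecreasing on [0, ∞)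
  have hmono : ∀ s t : ℝ, 0 ≤ s → s ≤ t → h s ≤ h t := by
    intro s t hs hst
    rcases eq_or_lt_of_le hst with rfl | hlt
    · exact le_refl _
    have ht : 0 < t := lt_of_le_of_lt hs hlt
    have ha : (0:ℝ) ≤ (t + s) / (2 * t) := by positivity
    have hb2 : (0:ℝ) ≤ (t - s) / (2 * t) := by
      apply div_nonneg <;> linarith
    have hab : (t + s) / (2 * t) + (t - s) / (2 * t) = 1 := by field_simp; ring
    have key := hconv.2 (Set.mem_univ t) (Set.mem_univ (-t)) ha hb2 hab
    simp only [smul_eq_mul, heven] at key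
    have hcomb : (t + s) / (2 * t) * t + (t - s) / (2 * t) * (-t) = s := by
      field_simp; ring
    rw [hcomb] at key
    calc h s ≤ (t + s) / (2 * t) * h t + (t - s) / (2 * t) * h t := key
      _ = ((t + s) / (2 * t) + (t - s) / (2 * t)) * h t := by ring
      _ = h t := by rw [hab, one_mul]
  have hLge : ∀ z p : H, (((inner ℝ z p : ℝ) - H₀ p : ℝ) : EReal) ≤ L₀ z := fun z p => by
    rw [hL₀]
    exact le_iSup (fun p : H => (((inner ℝ z p : ℝ) - H₀ p : ℝ) : EReal)) p
  constructor
  · intro z p₀ hzp hperp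
    apply le_antisymm
    · rw [hL₀, hl]
      apply iSup_le
      intro p
      have h1 : (inner ℝ z p : ℝ) ≤ ‖p₀‖ * ‖S p‖ := by
        rw [← hzp, hSsa]
        exact real_inner_le_norm p₀ (S p)
      have h2 : (inner ℝ z p : ℝ) - H₀ p ≤ ‖p₀‖ * ‖S p‖ - h ‖S p‖ := by
        rw [hH₀]; linarith
      calc (((inner ℝ z p : ℝ) - H₀ p : ℝ) : EReal)
          ≤ ((‖p₀‖ * ‖S p‖ - h ‖S p‖ : ℝ) : EReal) := EReal.coe_le_coe_iff.2 h2
        _ ≤ _ := le_iSup (fun t : {t : ℝ // 0 ≤ t} =>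
            ((‖p₀‖ * (t : ℝ) - h t : ℝ) : EReal)) ⟨‖S p‖, norm_nonneg _⟩
    · rw [hl]
      apply iSup_le
      rintro ⟨t, ht⟩
      show ((‖p₀‖ * t - h t : ℝ) : EReal) ≤ L₀ z
      by_cases h0 : p₀ = 0 ∨ t = 0
      · have hval : ‖p₀‖ * t - h t ≤ (inner ℝ z (0:H) : ℝ) - H₀ 0 := by
          have hH00 : H₀ (0:H) = h 0 := by rw [hH₀]; simp
          rw [inner_zero_right, hH00]
          rcases h0 with rfl | rfl
          · have := hmono 0 t le_rfl ht
            simp only [norm_zero, zero_mul]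
            linarith
          · simp
        exact le_trans (EReal.coe_le_coe_iff.2 hval) (hLge z 0)
      push_neg at h0
      obtain ⟨hp₀ne, htne⟩ := h0
      have ht0 : 0 < t := lt_of_le_of_ne ht (Ne.symm htne)
      have hnp₀ : 0 < ‖p₀‖ := norm_pos_iff.2 hp₀ne
      apply ereal_le_of_forall_eps
      intro ε hε
      set Er : Submodule ℝ H := LinearMap.range (S : H →ₗ[ℝ] H) with hEr
      have hp₀cl : p₀ ∈ Er.topologicalClosure := by
        rw [← Submodule.orthogonal_orthogonal_eq_closure, Submodule.mem_orthogonal]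
        intro u hu
        have hSu : S u = 0 := by
          have h1 : (inner ℝ (S (S u)) u : ℝ) = 0 := by
            refine (Submodule.mem_orthogonal Er u).1 hu _ ?_
            exact LinearMap.mem_range.2 ⟨S u, rfl⟩
          rw [hSsa] at h1
          exact inner_self_eq_zero.1 (by rw [real_inner_comm] at h1; exact h1)
        rw [real_inner_comm]
        exact hperp u hSu
      set u : H := (t / ‖p₀‖) • p₀ with hu_def
      have hu_cl : u ∈ closure (Er : Set H) := by
        rw [← Submodule.topologicalClosure_coe]
        exact Submodule.smul_mem _ _ hp₀cl
      have hu_norm : ‖u‖ = t := by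
        rw [hu_def, norm_smul, Real.norm_eq_abs, abs_of_pos (by positivity),
          div_mul_cancel₀ _ (ne_of_gt hnp₀)]
      set δ : ℝ := min (t / 2) (ε / (2 * ‖p₀‖ + 1)) with hδdef
      have hδpos : 0 < δ := lt_min (by linarith) (by positivity)
      obtain ⟨v, hvEr, hvu⟩ := Metric.mem_closure_iff.1 hu_cl δ hδpos
      rw [dist_eq_norm] at hvu
      obtain ⟨p, hp⟩ := LinearMap.mem_range.1 hvEr
      have hp' : S p = v := hp
      have hδt : δ ≤ t / 2 := min_le_left _ _
      have hvnorm_lb : t / 2 ≤ ‖v‖ := by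
        have h3 : ‖u‖ - ‖v‖ ≤ ‖u - v‖ := norm_sub_norm_le u v
        linarith [hu_norm]
      have hvpos : 0 < ‖v‖ := lt_of_lt_of_le (by linarith) hvnorm_lb
      set c : ℝ := t / ‖v‖ with hcdef
      set w : H := c • v with hwdef
      have hw_norm : ‖w‖ = t := by
        rw [hwdef, norm_smul, Real.norm_eq_abs, abs_of_pos (by positivity),
          div_mul_cancel₀ _ (ne_of_gt hvpos)]
      have hwv : ‖w - v‖ ≤ δ := by
        have h4 : w - v = (c - 1) • v := by rw [sub_smul, one_smul]
        have h5 : |c - 1| * ‖v‖ = |t - ‖v‖| := by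
          rw [hcdef, ← abs_of_pos hvpos, ← abs_mul]
          congr 1
          field_simp
          rw [abs_of_pos hvpos]; ring
        have h6 : |t - ‖v‖| ≤ ‖u - v‖ := by
          rw [← hu_norm]
          exact abs_norm_sub_norm_le u v
        rw [h4, norm_smul, Real.norm_eq_abs, h5]
        linarith
      have hwu : ‖w - u‖ ≤ 2 * δ := by
        calc ‖w - u‖ = ‖(w - v) + (v - u)‖ := by rw [sub_add_sub_cancel]
          _ ≤ ‖w - v‖ + ‖v - u‖ := norm_add_le _ _
          _ ≤ δ + δ := by
              rw [← norm_neg (v - u), neg_sub]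
              linarith
          _ = 2 * δ := by ring
      have hinner_u : (inner ℝ p₀ u : ℝ) = t * ‖p₀‖ := by
        rw [hu_def, real_inner_smul_right, real_inner_self_eq_norm_mul_norm]
        field_simp
      have hinner_w : t * ‖p₀‖ - ε ≤ (inner ℝ p₀ w : ℝ) := by
        have h7 : |(inner ℝ p₀ (w - u) : ℝ)| ≤ ‖p₀‖ * ‖w - u‖ := abs_real_inner_le_norm p₀ (w - u)
        have h8 : (inner ℝ p₀ w : ℝ) = inner ℝ p₀ u + (inner ℝ p₀ (w - u) : ℝ) := by
          rw [inner_sub_right]; ring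
        have hδ2 : δ ≤ ε / (2 * ‖p₀‖ + 1) := min_le_right _ _
        have hδε : 2 * ‖p₀‖ * δ ≤ ε := by
          rw [le_div_iff₀ (by positivity)] at hδ2
          nlinarith [hδpos.le]
        have h9 : -(‖p₀‖ * ‖w - u‖) ≤ (inner ℝ p₀ (w - u) : ℝ) := by
          have := neg_abs_le (inner ℝ p₀ (w - u) : ℝ)
          linarith
        nlinarith [norm_nonneg p₀]
      have hfinal : ‖p₀‖ * t - h t - ε ≤ (inner ℝ z (c • p) : ℝ) - H₀ (c • p) := by
        have hS : S (c • p) = w := by rw [map_smul, hp']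
        rw [hH₀, hS, hw_norm, ← hzp, hSsa, hS]
        linarith [hinner_w]
      exact le_trans (EReal.coe_le_coe_iff.2 hfinal) (hLge z (c • p))
  · intro z hz
    apply ereal_eq_top_of_forall
    intro M
    by_cases hC : ∃ C : ℝ, ∀ p : H, ‖S p‖ ≤ 1 → (inner ℝ z p : ℝ) ≤ C
    · exfalso
      obtain ⟨C, hC⟩ := hC
      have hb : ∀ p : H, (inner ℝ z p : ℝ) ≤ C * ‖S p‖ := by
        intro p
        by_cases hSp : S p = 0
        · rw [hSp, norm_zero, mul_zero]
          by_contra hpos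
          push_neg at hpos
          obtain ⟨n, hn⟩ := exists_nat_gt (C / (inner ℝ z p : ℝ))
          have hfeas : ‖S (((n : ℝ) + 1) • p)‖ ≤ 1 := by
            rw [map_smul, hSp, smul_zero, norm_zero]; norm_num
          have hCle := hC _ hfeas
          rw [real_inner_smul_right] at hCle
          have hlt : C < ((n : ℝ) + 1) * (inner ℝ z p : ℝ) := by
            rw [div_lt_iff₀ hpos] at hn
            nlinarith
          linarith
        · have hposn : 0 < ‖S p‖ := norm_pos_iff.2 hSp
          have hfeas : ‖S ((‖S p‖)⁻¹ • p)‖ ≤ 1 := by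
            rw [map_smul, norm_smul, Real.norm_eq_abs, abs_of_pos (inv_pos.2 hposn),
              inv_mul_cancel₀ (ne_of_gt hposn)]
          have hCle := hC _ hfeas
          rw [real_inner_smul_right] at hCle
          calc (inner ℝ z p : ℝ) = ‖S p‖ * ((‖S p‖)⁻¹ * (inner ℝ z p : ℝ)) := by
                field_simp
            _ ≤ ‖S p‖ * C := by
                exact mul_le_mul_of_nonneg_left hCle hposn.le
            _ = C * ‖S p‖ := by ring
      have hker : ∀ q : H, S q = 0 → (inner ℝ z q : ℝ) = 0 := by
        intro q hq
        have h1 := hb q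
        have h2 := hb (-q)
        rw [hq, norm_zero, mul_zero] at h1
        rw [map_neg, hq, neg_zero, norm_zero, mul_zero, inner_neg_right] at h2
        linarith
      set Er : Submodule ℝ H := LinearMap.range (S : H →ₗ[ℝ] H) with hEr
      have hmem : ∀ v : Er, S (Classical.choose (LinearMap.mem_range.1 v.2)) = (v : H) :=
        fun v => Classical.choose_spec (LinearMap.mem_range.1 v.2)
      set g : Er → ℝ := fun v => (inner ℝ z (Classical.choose (LinearMap.mem_range.1 v.2)) : ℝ)
        with hgdef
      have hgspec : ∀ (v : Er) (p : H), S p = (v : H) → g v = (inner ℝ z p : ℝ) := by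
        intro v p hpv
        have hd : S (Classical.choose (LinearMap.mem_range.1 v.2) - p) = 0 := by
          rw [map_sub, hmem v, hpv, sub_self]
        have := hker _ hd
        rw [inner_sub_right] at this
        rw [hgdef]
        linarith
      have hmemS : ∀ p : H, S p ∈ Er := fun p => LinearMap.mem_range.2 ⟨p, rfl⟩
      set ψ : Er →ₗ[ℝ] ℝ :=
        { toFun := g
          map_add' := by
            intro v₁ v₂
            obtain ⟨p₁, hp₁⟩ := LinearMap.mem_range.1 v₁.2
            obtain ⟨p₂, hp₂⟩ := LinearMap.mem_range.1 v₂.2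
            have hp₁' : S p₁ = (v₁ : H) := hp₁
            have hp₂' : S p₂ = (v₂ : H) := hp₂
            have hsum : S (p₁ + p₂) = ((v₁ + v₂ : Er) : H) := by
              rw [map_add, hp₁', hp₂']; rfl
            rw [hgspec _ _ hsum, hgspec _ _ hp₁', hgspec _ _ hp₂', inner_add_right]
          map_smul' := by
            intro r v
            show g (r • v) = r * g v
            obtain ⟨p, hp⟩ := LinearMap.mem_range.1 v.2
            have hp'' : S p = (v : H) := hp
            have hsm : S (r • p) = ((r • v : Er) : H) := by
              rw [map_smul, hp'']; rfl
            rw [hgspec _ _ hsm, hgspec _ _ hp'', real_inner_smul_right] } with hψdef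
      have hψbound : ∀ v : Er, ‖ψ v‖ ≤ C * ‖v‖ := by
        intro v
        obtain ⟨p, hp⟩ := LinearMap.mem_range.1 v.2
        have hp'' : S p = (v : H) := hp
        have hgv : ψ v = (inner ℝ z p : ℝ) := hgspec _ _ hp''
        have habs : |(inner ℝ z p : ℝ)| ≤ C * ‖S p‖ := by
          rcases abs_cases (inner ℝ z p : ℝ) with ⟨he, _⟩ | ⟨he, _⟩
          · rw [he]; exact hb p
          · rw [he]
            have := hb (-p)
            rw [map_neg, norm_neg, inner_neg_right] at this
            linarith
        rw [hgv, Real.norm_eq_abs]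
        have : ‖(v : H)‖ = ‖v‖ := rfl
        rw [← this, ← hp'']
        exact habs
      set f : Er →L[ℝ] ℝ := ψ.mkContinuous C hψbound with hfdef
      obtain ⟨g', hg'ext, _⟩ := exists_extension_norm_eq Er f
      set w : H := (InnerProductSpace.toDual ℝ H).symm g' with hwdef
      have hw : ∀ p : H, (inner ℝ w (S p) : ℝ) = (inner ℝ z p : ℝ) := by
        intro p
        calc (inner ℝ w (S p) : ℝ) = g' (S p) := InnerProductSpace.toDual_symm_apply
          _ = f ⟨S p, hmemS p⟩ := hg'ext ⟨S p, hmemS p⟩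
          _ = ψ ⟨S p, hmemS p⟩ := rfl
          _ = (inner ℝ z p : ℝ) := hgspec ⟨S p, hmemS p⟩ p rfl
      have hSw : ∀ x : H, (inner ℝ (S w) x : ℝ) = (inner ℝ z x : ℝ) := fun x => by
        rw [hSsa]; exact hw x
      have hSwz : S w = z := by
        have hzero : (inner ℝ (S w - z) (S w - z) : ℝ) = 0 := by
          rw [inner_sub_left, hSw]
          exact sub_self _
        have := inner_self_eq_zero.1 hzero
        rwa [sub_eq_zero] at this
      exact hz ⟨w, hSwz⟩
    · push_neg at hC
      obtain ⟨p, hp1, hp2⟩ := hC (M + h 1)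
      have hhle : h ‖S p‖ ≤ h 1 := hmono _ _ (norm_nonneg _) hp1
      have : M ≤ (inner ℝ z p : ℝ) - H₀ p := by
        rw [hH₀]; linarith
      exact le_trans (EReal.coe_le_coe_iff.2 this) (hLge z p)
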